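/- Let D be an integral domain with quotient field K, and let {D_i} be a collection of local overrings of D with D = ⋂ D_i. Suppose there is a valuation overring V containing all D_i which dominates all of them except possibly one ring D_1. Then D is local: the sum of any two non-units of D lies in the maximal ideal of D_1 intersected with D. -/

import Mathlib

lemma subring_isUnit_iff {K : Type*} [Field K] {R : Subring K} {x : K} (hx : x ∈ R) :
    IsUnit (⟨x, hx⟩ : R) ↔ x ≠ 0 ∧ x⁻¹ ∈ R := by
  constructor
  · rintro ⟨u, hu⟩
    have h1 : (u.inv : K) * x = 1 := by
      have := u.inv_mul
      rw [hu] at this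
      exact congrArg (Subtype.val) this
    have hx0 : x ≠ 0 := by
      intro h; rw [h, mul_zero] at h1; exact one_ne_zero h1.symm
    refine ⟨hx0, ?_⟩
    have : (u.inv : K) = x⁻¹ := by field_simp [eq_comm] at h1 ⊢; linear_combination h1
    rw [← this]; exact u.inv.2
  · rintro ⟨hx0, hinv⟩
    exact IsUnit.of_mul_eq_one ⟨x⁻¹, hinv⟩ (by ext; simp [mul_inv_cancel₀ hx0])

/-- **Lemma 4.3 (intersection of local overrings, all but one dominated).**
Let `D` be an integral domain with quotient field `K` and `{Dᵢ}` a collection of local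
overrings with `D = ⋂ᵢ Dᵢ`.  Suppose a valuation overring `V` contains all the `Dᵢ` and
dominates all of them except possibly one ring `D_{i₀}`.  Then `D` is local, and the sum of
any two nonunits of `D` lies in the maximal ideal of `D_{i₀}` intersected with `D` (i.e. it
is a nonunit of `D_{i₀}` belonging to `D`). -/
theorem intersection_local_overrings_one_exception_isLocalRing
    {K : Type*} [Field K] (D : Subring K) (hfrac : IsFractionRing D K)
    {ι : Type*} (Di : ι → Subring K) (i₀ : ι)
    (hover : ∀ i, D ≤ Di i) (hloc : ∀ i, IsLocalRing (Di i))
    (hint : (⨅ i, Di i) = D)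
    (V : ValuationSubring K)
    (hVi : ∀ i, Di i ≤ V.toSubring)
    (hdom : ∀ i, i ≠ i₀ → ∀ x : K, (hx : x ∈ Di i) → ¬ IsUnit (⟨x, hx⟩ : Di i) →
      ¬ IsUnit (⟨x, hVi i hx⟩ : V.toSubring)) :
    IsLocalRing D ∧
      ∀ x y : K, (hx : x ∈ D) → (hy : y ∈ D) →
        ¬ IsUnit (⟨x, hx⟩ : D) → ¬ IsUnit (⟨y, hy⟩ : D) →
        ∃ hxy : x + y ∈ Di i₀, ¬ IsUnit (⟨x + y, hxy⟩ : Di i₀) := by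
  -- Key claim: every nonunit of D is a nonunit of D_{i₀}.
  have key : ∀ x : K, (hx : x ∈ D) → ¬ IsUnit (⟨x, hx⟩ : D) →
      ¬ IsUnit (⟨x, hover i₀ hx⟩ : Di i₀) := by
    intro x hx hxu hxu₀
    rw [subring_isUnit_iff] at hxu hxu₀
    push_neg at hxu
    obtain ⟨hx0, hxinv₀⟩ := hxu₀
    have hxinvD : x⁻¹ ∉ D := hxu hx0
    -- find j with x⁻¹ ∉ Di j
    have : ∃ j, x⁻¹ ∉ Di j := by
      by_contra h
      push_neg at h
      exact hxinvD (hint ▸ (Subring.mem_iInf.2 h))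
    obtain ⟨j, hj⟩ := this
    have hji₀ : j ≠ i₀ := fun h => hj (h ▸ hxinv₀)
    have hxj : x ∈ Di j := hover j hx
    have hxju : ¬ IsUnit (⟨x, hxj⟩ : Di j) := by
      rw [subring_isUnit_iff]; rintro ⟨-, h⟩; exact hj h
    have hV := hdom j hji₀ x hxj hxju
    exact hV ((subring_isUnit_iff _).2 ⟨hx0, hVi i₀ hxinv₀⟩)
  -- sum claim
  have sum : ∀ x y : K, (hx : x ∈ D) → (hy : y ∈ D) →
      ¬ IsUnit (⟨x, hx⟩ : D) → ¬ IsUnit (⟨y, hy⟩ : D) →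
      ∃ hxy : x + y ∈ Di i₀, ¬ IsUnit (⟨x + y, hxy⟩ : Di i₀) := by
    intro x y hx hy hxu hyu
    refine ⟨(Di i₀).add_mem (hover i₀ hx) (hover i₀ hy), ?_⟩
    have := hloc i₀
    have h := IsLocalRing.nonunits_add (R := Di i₀)
      (key x hx hxu) (key y hy hyu)
    have : (⟨x, hover i₀ hx⟩ + ⟨y, hover i₀ hy⟩ : Di i₀) =
        ⟨x + y, (Di i₀).add_mem (hover i₀ hx) (hover i₀ hy)⟩ := rfl
    rwa [this] at h
  refine ⟨?_, sum⟩
  refine IsLocalRing.of_nonunits_add ?_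
  rintro ⟨a, ha⟩ ⟨b, hb⟩ hau hbu
  obtain ⟨hab, habu⟩ := sum a b ha hb hau hbu
  intro hu
  apply habu
  rw [subring_isUnit_iff] at hu ⊢
  exact ⟨hu.1, hover i₀ hu.2⟩
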